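/- Let A \subseteq B be an extension of commutative rings and M a finitely generated flat A-module such that M \otimes_A B is B-projective. Then Ann_A(M) is a principal ideal generated by an idempotent, and Ann_A(M) \cdot B = Ann_B(M \otimes_A B). -/
import Mathlib


open TensorProduct

/-- The annihilator of a finitely generated projective module is generated by an
idempotent. -/
theorem ann_of_fg_projective (B N : Type*) [CommRing B] [AddCommGroup N] [Module B N]
    [Module.Finite B N] (hproj : Module.Projective B N) :
    ∃ f : B, IsIdempotentElem f ∧ f ∈ Module.annihilator B N ∧
      Module.annihilator B N = Ideal.span {f} := by
  obtain ⟨s, hs⟩ := Module.projective_def.mp hproj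
  set τ : Ideal B := ⨆ (g : N →ₗ[B] B), LinearMap.range g with hτ
  have hmem : ∀ (g : N →ₗ[B] B) (x : N), g x ∈ τ := fun g x =>
    (le_iSup (fun g : N →ₗ[B] B => LinearMap.range g) g) ⟨x, rfl⟩
  have htop : (⊤ : Submodule B N) ≤ τ • ⊤ := by
    intro x _
    have hx : x = Finsupp.linearCombination B id (s x) := (hs x).symm
    rw [hx, Finsupp.linearCombination_apply, Finsupp.sum]
    refine Submodule.sum_mem _ fun p _ => ?_
    refine Submodule.smul_mem_smul ?_ trivial
    exact hmem ((Finsupp.lapply p).comp s) x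
  obtain ⟨r, hr1, hr2⟩ :=
    Submodule.exists_sub_one_mem_and_smul_eq_zero_of_fg_of_le_smul τ ⊤ Module.Finite.fg_top htop
  have hrann : r ∈ Module.annihilator B N :=
    Module.mem_annihilator.mpr fun m => hr2 m trivial
  have hAτ : ∀ b ∈ Module.annihilator B N, ∀ t ∈ τ, b * t = 0 := by
    intro b hb t ht
    have hker : τ ≤ LinearMap.ker (LinearMap.lsmul B B b) := by
      rw [hτ, iSup_le_iff]
      intro g
      rintro _ ⟨x, rfl⟩
      simp only [LinearMap.mem_ker, LinearMap.lsmul_apply, smul_eq_mul]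
      rw [← smul_eq_mul, ← map_smul, Module.mem_annihilator.mp hb x, map_zero]
    simpa using hker ht
  have hbr : ∀ b ∈ Module.annihilator B N, b * r = b := by
    intro b hb
    have h0 : b * (r - 1) = 0 := hAτ b hb (r - 1) hr1
    linear_combination h0
  refine ⟨r, ?_, hrann, ?_⟩
  · exact hbr r hrann
  · apply le_antisymm
    · intro b hb
      rw [Ideal.mem_span_singleton']
      exact ⟨b, hbr b hb⟩
    · rw [Ideal.span_le, Set.singleton_subset_iff]
      exact hrann

/-- If `A ⊆ B` is a ring extension, `M` a finitely generated flat `A`-module with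
`M ⊗_A B` projective over `B`, then `Ann_A(M)` is principal generated by an
idempotent, and its extension to `B` is `Ann_B(M ⊗_A B)`. -/
theorem annihilator_principal_and_extension
    (A B M : Type*) [CommRing A] [CommRing B] [Algebra A B]
    (hinj : Function.Injective (algebraMap A B))
    [AddCommGroup M] [Module A M] [Module.Finite A M] [Module.Flat A M]
    (hproj : Module.Projective B (B ⊗[A] M)) :
    (∃ e : A, IsIdempotentElem e ∧ Module.annihilator A M = Ideal.span {e}) ∧
      Ideal.map (algebraMap A B) (Module.annihilator A M) =
        Module.annihilator B (B ⊗[A] M) := by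
  obtain ⟨f, hfid, hfann, hspan⟩ := ann_of_fg_projective B (B ⊗[A] M) hproj
  set φ := algebraMap A B with hφ
  -- the image of `Ann_A M` annihilates `B ⊗ M`
  have hImap : ∀ a ∈ Module.annihilator A M, φ a ∈ Module.annihilator B (B ⊗[A] M) := by
    intro a ha
    rw [Module.mem_annihilator]
    intro x
    have h1 : a • x = 0 := by
      induction x using TensorProduct.induction_on with
      | zero => simp
      | tmul b m =>
          have ham : a • m = 0 := Module.mem_annihilator.mp ha m
          rw [← TensorProduct.tmul_smul, ham, TensorProduct.tmul_zero]
      | add x y hx hy => rw [smul_add, hx, hy, add_zero]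
    rw [algebraMap_smul B a x, h1]
  -- the ideal J = annihilator of f in A
  set g : A →ₗ[A] B := LinearMap.toSpanSingleton A B f with hg
  set J := LinearMap.ker g with hJ
  -- M = J • M, by flatness
  have hJtop : (⊤ : Submodule A M) ≤ J • ⊤ := by
    set gbar : (A ⧸ J) →ₗ[A] B := J.liftQ g le_rfl with hgbar
    have hgbarinj : Function.Injective gbar := by
      rw [← LinearMap.ker_eq_bot]
      exact Submodule.ker_liftQ_eq_bot J g le_rfl le_rfl
    have hinj2 : Function.Injective (LinearMap.rTensor M gbar) :=
      Module.Flat.rTensor_preserves_injective_linearMap gbar hgbarinj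
    intro m _
    have hfm : f ⊗ₜ[A] m = (0 : B ⊗[A] M) := by
      have h1 : f ⊗ₜ[A] m = f • ((1 : B) ⊗ₜ[A] m) := by
        rw [TensorProduct.smul_tmul', smul_eq_mul, mul_one]
      rw [h1, Module.mem_annihilator.mp hfann]
    have key : (LinearMap.rTensor M gbar) ((Ideal.Quotient.mk J 1) ⊗ₜ[A] m) = 0 := by
      rw [LinearMap.rTensor_tmul]
      have : gbar (Ideal.Quotient.mk J 1) = f := by
        show g 1 = f
        rw [hg, LinearMap.toSpanSingleton_apply, one_smul]
      rw [this, hfm]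
    have hz : (Ideal.Quotient.mk J 1) ⊗ₜ[A] m = (0 : (A ⧸ J) ⊗[A] M) := by
      apply hinj2
      rw [key, map_zero]
    have := congrArg (quotTensorEquivQuotSMul M J) hz
    rw [quotTensorEquivQuotSMul_mk_tmul, one_smul, map_zero] at this
    exact (Submodule.Quotient.mk_eq_zero _).mp this
  obtain ⟨e, he1, he2⟩ :=
    Submodule.exists_sub_one_mem_and_smul_eq_zero_of_fg_of_le_smul J ⊤ Module.Finite.fg_top hJtop
  have heI : e ∈ Module.annihilator A M :=
    Module.mem_annihilator.mpr fun m => he2 m trivial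
  -- φ (e - 1) * f = 0
  have h2 : φ (e - 1) * f = 0 := by
    have h3 : g (e - 1) = 0 := he1
    rwa [hg, LinearMap.toSpanSingleton_apply, Algebra.smul_def] at h3
  -- a ∈ Ann_A M ⇒ a * (e - 1) = 0
  have hkill : ∀ a ∈ Module.annihilator A M, a * (e - 1) = 0 := by
    intro a ha
    apply hinj
    rw [map_mul, map_zero]
    have h1 : φ a ∈ Ideal.span {f} := hspan ▸ hImap a ha
    obtain ⟨c, hc⟩ := Ideal.mem_span_singleton'.mp h1
    calc φ a * φ (e - 1) = c * f * φ (e - 1) := by rw [hc]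
      _ = c * (φ (e - 1) * f) := by ring
      _ = 0 := by rw [h2, mul_zero]
  constructor
  · refine ⟨e, ?_, ?_⟩
    · have := hkill e heI
      show e * e = e
      linear_combination this
    · apply le_antisymm
      · intro a ha
        rw [Ideal.mem_span_singleton']
        exact ⟨a, by linear_combination hkill a ha⟩
      · rw [Ideal.span_le, Set.singleton_subset_iff]
        exact heI
  · apply le_antisymm
    · rw [Ideal.map_le_iff_le_comap]
      intro a ha
      exact hImap a ha
    · rw [hspan, Ideal.span_le, Set.singleton_subset_iff]
      have hfe : f = φ e * f := by
        have : φ (e - 1) = φ e - 1 := by rw [map_sub, map_one]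
        rw [this] at h2
        linear_combination -h2
      rw [hfe]
      exact Ideal.mul_mem_right f _ (Ideal.mem_map_of_mem φ heI)
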